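/- arXiv:1007.3074 — 2 statements merged into one kernel-verified Lean document; each statement's English description precedes it below -/
import Mathlib

section
/- For all real t with 0 < t ≤ 1, one has |Y_0(t) − (2/π) log t| ≤ (2/π)(log 2 − γ + 1/4), where Y_0 is the Bessel function of the second kind of order zero and γ is Euler's constant. -/
set_option maxHeartbeats 1000000


open Real

/-- The Bessel function of the first kind of order zero, defined by its power series. -/
noncomputable def besselJ0 (t : ℝ) : ℝ :=
  ∑' m : ℕ, (-1 : ℝ) ^ m * (t / 2) ^ (2 * m) / ((Nat.factorial m : ℝ)) ^ 2

/-- Partial harmonic sum `h_m = ∑_{j=1}^m 1/j`. -/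
noncomputable def harmonicSum (m : ℕ) : ℝ :=
  ∑ j ∈ Finset.range m, (1 : ℝ) / (j + 1)

/-- The Bessel function of the second kind of order zero, defined by its power series:
`Y₀(t) = (2/π)(log(t/2) + γ)J₀(t) + (2/π)∑_{m≥1}(−1)^{m+1} h_m (t/2)^{2m}/(m!)²`. -/
noncomputable def besselY0 (t : ℝ) : ℝ :=
  (2 / π) * (Real.log (t / 2) + Real.eulerMascheroniConstant) * besselJ0 t +
    (2 / π) * ∑' m : ℕ, (-1 : ℝ) ^ m * harmonicSum (m + 1) * (t / 2) ^ (2 * (m + 1)) /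
      ((Nat.factorial (m + 1) : ℝ)) ^ 2

lemma aux_gamma_lt : Real.eulerMascheroniConstant < 0.609 := by
  have h := Real.eulerMascheroniConstant_lt_eulerMascheroniSeq' 16
  have h2 : Real.eulerMascheroniSeq' 16 = (harmonic 16 : ℝ) - Real.log 16 := by
    rw [Real.eulerMascheroniSeq']; norm_num
  have h3 : (harmonic 16 : ℝ) = 2436559/720720 := by
    norm_num [harmonic, Finset.sum_range_succ]
  have h4 : Real.log 16 = 4 * Real.log 2 := by
    rw [show (16:ℝ) = 2^(4:ℕ) by norm_num, Real.log_pow]; push_cast; ring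
  have h5 : (0.6931471803:ℝ) < Real.log 2 := Real.log_two_gt_d9
  rw [h2, h3, h4] at h
  nlinarith

lemma aux_harmonicSum_nonneg (n : ℕ) : 0 ≤ harmonicSum n := by
  unfold harmonicSum
  apply Finset.sum_nonneg
  intro j _
  positivity

lemma aux_harmonicSum_le (n : ℕ) : harmonicSum n ≤ n := by
  unfold harmonicSum
  calc (∑ j ∈ Finset.range n, (1 : ℝ) / (j + 1)) ≤ ∑ j ∈ Finset.range n, (1:ℝ) := by
        apply Finset.sum_le_sum
        intro j _
        rw [div_le_one (by positivity)]
        linarith [Nat.cast_nonneg (α := ℝ) j]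
    _ = n := by simp

lemma aux_tsum_J_bound (x : ℝ) (hx0 : 0 ≤ x) (hx1 : x ≤ 1/4) :
    Summable (fun m : ℕ => (-1:ℝ)^m * x^m / ((Nat.factorial m : ℝ))^2) ∧
    |(∑' m : ℕ, (-1:ℝ)^m * x^m / ((Nat.factorial m : ℝ))^2) - (1 - x)| ≤ x^2/3 := by
  set f : ℕ → ℝ := fun m => (-1:ℝ)^m * x^m / ((Nat.factorial m : ℝ))^2 with hf
  have habsf : ∀ m, |f m| = x^m / ((Nat.factorial m : ℝ))^2 := by
    intro m
    simp [hf, abs_div, abs_mul, abs_pow, abs_of_nonneg hx0, Nat.abs_cast]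
  have habs : ∀ m, |f m| ≤ (1/4:ℝ)^m := by
    intro m
    have h1 : (1:ℝ) ≤ ((Nat.factorial m : ℝ))^2 := by
      have h0 : (1:ℝ) ≤ (Nat.factorial m : ℝ) := by exact_mod_cast Nat.factorial_pos m
      nlinarith
    rw [habsf m]
    calc x^m / ((Nat.factorial m : ℝ))^2 ≤ x^m / 1 :=
          div_le_div_of_nonneg_left (by positivity) (by norm_num) h1
      _ = x^m := by ring
      _ ≤ (1/4:ℝ)^m := pow_le_pow_left₀ hx0 hx1 m
  have hsum : Summable f :=
    Summable.of_abs (Summable.of_nonneg_of_le (fun m => abs_nonneg _) habs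
      (summable_geometric_of_lt_one (by norm_num) (by norm_num)))
  refine ⟨hsum, ?_⟩
  have hsplit := Summable.sum_add_tsum_nat_add 2 hsum
  have hsum2 : (∑ i ∈ Finset.range 2, f i) = 1 - x := by
    rw [Finset.sum_range_succ, Finset.sum_range_one, hf]
    simp [Nat.factorial]
    ring
  have heq : (∑' m, f m) - (1 - x) = ∑' k, f (k + 2) := by
    rw [← hsplit, hsum2]; ring
  rw [heq]
  have htail : ∀ k : ℕ, |f (k + 2)| ≤ x^2/4 * (1/4:ℝ)^k := by
    intro k
    have h2 : (2:ℝ) ≤ (Nat.factorial (k+2) : ℝ) := by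
      have h3 : (k+2 : ℝ) ≤ (Nat.factorial (k+2) : ℝ) := by
        exact_mod_cast Nat.self_le_factorial (k+2)
      linarith [Nat.cast_nonneg (α := ℝ) k]
    have h4 : (4:ℝ) ≤ ((Nat.factorial (k+2) : ℝ))^2 := by nlinarith
    rw [habsf (k+2)]
    calc x^(k+2) / ((Nat.factorial (k+2) : ℝ))^2 ≤ x^(k+2)/4 :=
          div_le_div_of_nonneg_left (by positivity) (by norm_num) h4
      _ = x^2 * x^k / 4 := by ring
      _ ≤ x^2 * (1/4:ℝ)^k / 4 := by
          have := pow_le_pow_left₀ hx0 hx1 k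
          nlinarith [pow_nonneg hx0 k, sq_nonneg x]
      _ = x^2/4 * (1/4:ℝ)^k := by ring
  have hgs : Summable (fun k : ℕ => x^2/4 * (1/4:ℝ)^k) :=
    (summable_geometric_of_lt_one (by norm_num) (by norm_num)).mul_left _
  have htsum : Summable fun k : ℕ => |f (k + 2)| := ((summable_nat_add_iff 2).2 hsum).abs
  have hnorm : |∑' k, f (k + 2)| ≤ ∑' k, |f (k + 2)| := by
    have := norm_tsum_le_tsum_norm (f := fun k => f (k + 2))
      (by simpa [Real.norm_eq_abs] using htsum)
    simpa [Real.norm_eq_abs] using this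
  calc |∑' k, f (k + 2)| ≤ ∑' k, |f (k + 2)| := hnorm
    _ ≤ ∑' k, x^2/4 * (1/4:ℝ)^k := Summable.tsum_le_tsum htail htsum hgs
    _ = x^2/4 * (4/3) := by
        rw [tsum_mul_left, tsum_geometric_of_lt_one (by norm_num) (by norm_num)]; norm_num
    _ = x^2/3 := by ring

lemma aux_tsum_S_bound (x : ℝ) (hx0 : 0 ≤ x) (hx1 : x ≤ 1/4) :
    Summable (fun m : ℕ =>
      (-1:ℝ)^m * harmonicSum (m+1) * x^(m+1) / ((Nat.factorial (m+1) : ℝ))^2) ∧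
    |(∑' m : ℕ, (-1:ℝ)^m * harmonicSum (m+1) * x^(m+1) / ((Nat.factorial (m+1) : ℝ))^2) - x|
      ≤ 2*x^2/3 := by
  set g : ℕ → ℝ := fun m =>
    (-1:ℝ)^m * harmonicSum (m+1) * x^(m+1) / ((Nat.factorial (m+1) : ℝ))^2 with hg
  have habsg : ∀ m, |g m| = harmonicSum (m+1) * x^(m+1) / ((Nat.factorial (m+1) : ℝ))^2 := by
    intro m
    simp [hg, abs_div, abs_mul, abs_pow, abs_of_nonneg hx0, Nat.abs_cast,
      abs_of_nonneg (aux_harmonicSum_nonneg (m+1))]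
  have hkey : ∀ m : ℕ, harmonicSum (m+1) * x^(m+1) / ((Nat.factorial (m+1) : ℝ))^2
      ≤ x^(m+1) := by
    intro m
    have h1 : harmonicSum (m+1) ≤ (m+1 : ℝ) := by
      have := aux_harmonicSum_le (m+1); push_cast at this ⊢; linarith
    have h2 : (m+1 : ℝ) ≤ (Nat.factorial (m+1) : ℝ) := by
      exact_mod_cast Nat.self_le_factorial (m+1)
    have h3 : (1:ℝ) ≤ (Nat.factorial (m+1) : ℝ) := by
      exact_mod_cast Nat.factorial_pos (m+1)
    have h4 : (0:ℝ) < ((Nat.factorial (m+1) : ℝ))^2 := by positivity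
    rw [div_le_iff₀ h4]
    have h5 : (0:ℝ) ≤ x^(m+1) := pow_nonneg hx0 _
    have h6 : (Nat.factorial (m+1) : ℝ) ≤ ((Nat.factorial (m+1) : ℝ))^2 := by nlinarith
    nlinarith [aux_harmonicSum_nonneg (m+1), mul_le_mul_of_nonneg_right h1 h5,
      mul_le_mul_of_nonneg_right h2 h5, mul_le_mul_of_nonneg_right h6 h5]
  have habs : ∀ m, |g m| ≤ (1/4:ℝ)^m := by
    intro m
    rw [habsg m]
    calc harmonicSum (m+1) * x^(m+1) / ((Nat.factorial (m+1) : ℝ))^2 ≤ x^(m+1) := hkey m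
      _ ≤ (1/4:ℝ)^(m+1) := pow_le_pow_left₀ hx0 hx1 (m+1)
      _ ≤ (1/4:ℝ)^m := pow_le_pow_of_le_one (by norm_num) (by norm_num) (Nat.le_succ m)
  have hsum : Summable g :=
    Summable.of_abs (Summable.of_nonneg_of_le (fun m => abs_nonneg _) habs
      (summable_geometric_of_lt_one (by norm_num) (by norm_num)))
  refine ⟨hsum, ?_⟩
  have hsplit := Summable.sum_add_tsum_nat_add 1 hsum
  have hsum1 : (∑ i ∈ Finset.range 1, g i) = x := by
    rw [Finset.sum_range_one, hg]
    simp [harmonicSum, Nat.factorial]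
  have heq : (∑' m, g m) - x = ∑' k, g (k + 1) := by
    rw [← hsplit, hsum1]; ring
  rw [heq]
  have htail : ∀ k : ℕ, |g (k + 1)| ≤ x^2/2 * (1/4:ℝ)^k := by
    intro k
    have h1 : harmonicSum (k+2) ≤ (k+2 : ℝ) := by
      have := aux_harmonicSum_le (k+2); push_cast at this ⊢; linarith
    have h2 : ((k:ℝ)+2) ≤ (Nat.factorial (k+2) : ℝ) := by
      exact_mod_cast Nat.self_le_factorial (k+2)
    have h2' : (2:ℝ) ≤ (Nat.factorial (k+2) : ℝ) := by
      linarith [Nat.cast_nonneg (α := ℝ) k]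
    have h4 : (0:ℝ) < ((Nat.factorial (k+2) : ℝ))^2 := by positivity
    have h6 : ((k:ℝ)+2) * 2 ≤ ((Nat.factorial (k+2) : ℝ))^2 := by nlinarith
    have h7 : |g (k+1)| = harmonicSum (k+2) * x^(k+2) / ((Nat.factorial (k+2) : ℝ))^2 := habsg (k+1)
    rw [h7]
    have h8 : harmonicSum (k+2) * x^(k+2) / ((Nat.factorial (k+2) : ℝ))^2 ≤ x^(k+2)/2 := by
      rw [div_le_div_iff₀ h4 (by norm_num)]
      have h9 : (0:ℝ) ≤ x^(k+2) := pow_nonneg hx0 _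
      nlinarith [aux_harmonicSum_nonneg (k+2), mul_le_mul_of_nonneg_right h1 h9]
    calc harmonicSum (k+2) * x^(k+2) / ((Nat.factorial (k+2) : ℝ))^2 ≤ x^(k+2)/2 := h8
      _ = x^2 * x^k / 2 := by ring
      _ ≤ x^2 * (1/4:ℝ)^k / 2 := by
          have := pow_le_pow_left₀ hx0 hx1 k
          nlinarith [pow_nonneg hx0 k, sq_nonneg x]
      _ = x^2/2 * (1/4:ℝ)^k := by ring
  have hgs : Summable (fun k : ℕ => x^2/2 * (1/4:ℝ)^k) :=
    (summable_geometric_of_lt_one (by norm_num) (by norm_num)).mul_left _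
  have htsum : Summable fun k : ℕ => |g (k + 1)| := ((summable_nat_add_iff 1).2 hsum).abs
  have hnorm : |∑' k, g (k + 1)| ≤ ∑' k, |g (k + 1)| := by
    have := norm_tsum_le_tsum_norm (f := fun k => g (k + 1))
      (by simpa [Real.norm_eq_abs] using htsum)
    simpa [Real.norm_eq_abs] using this
  calc |∑' k, g (k + 1)| ≤ ∑' k, |g (k + 1)| := hnorm
    _ ≤ ∑' k, x^2/2 * (1/4:ℝ)^k := Summable.tsum_le_tsum htail htsum hgs
    _ = x^2/2 * (4/3) := by
        rw [tsum_mul_left, tsum_geometric_of_lt_one (by norm_num) (by norm_num)]; norm_num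
    _ = 2*x^2/3 := by ring

lemma aux_log_le_div_e {u : ℝ} (hu : 0 < u) : Real.log u ≤ u / Real.exp 1 := by
  have h := Real.log_le_sub_one_of_pos (show 0 < u / Real.exp 1 by positivity)
  rw [Real.log_div (ne_of_gt hu) (ne_of_gt (Real.exp_pos 1)), Real.log_exp] at h
  linarith

/-- For `0 < t ≤ 1`, `|Y₀(t) − (2/π) log t| ≤ (2/π)(log 2 − γ + 1/4)`. -/
theorem besselY0_log_bound (t : ℝ) (ht0 : 0 < t) (ht1 : t ≤ 1) :
    |besselY0 t - (2 / π) * Real.log t| ≤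
      (2 / π) * (Real.log 2 - Real.eulerMascheroniConstant + 1 / 4) := by
  set x : ℝ := (t/2)^2 with hxdef
  have hx0 : 0 ≤ x := sq_nonneg _
  have hx1 : x ≤ 1/4 := by rw [hxdef]; nlinarith
  obtain ⟨-, hJ⟩ := aux_tsum_J_bound x hx0 hx1
  obtain ⟨-, hS⟩ := aux_tsum_S_bound x hx0 hx1
  have hJ0eq : besselJ0 t = ∑' m : ℕ, (-1:ℝ)^m * x^m / ((Nat.factorial m : ℝ))^2 := by
    unfold besselJ0
    exact tsum_congr fun m => by rw [pow_mul]
  have hSeq : (∑' m : ℕ, (-1 : ℝ) ^ m * harmonicSum (m + 1) * (t / 2) ^ (2 * (m + 1)) /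
      ((Nat.factorial (m + 1) : ℝ)) ^ 2) =
      ∑' m : ℕ, (-1:ℝ)^m * harmonicSum (m+1) * x^(m+1) / ((Nat.factorial (m+1) : ℝ))^2 := by
    exact tsum_congr fun m => by rw [pow_mul]
  set J : ℝ := ∑' m : ℕ, (-1:ℝ)^m * x^m / ((Nat.factorial m : ℝ))^2 with hJdef
  set S : ℝ := ∑' m : ℕ, (-1:ℝ)^m * harmonicSum (m+1) * x^(m+1) /
    ((Nat.factorial (m+1) : ℝ))^2 with hSdef
  set L : ℝ := Real.log t with hLdef
  set γ : ℝ := Real.eulerMascheroniConstant with hγdef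
  -- rewrite the target
  have hlog : Real.log (t/2) = L - Real.log 2 := Real.log_div (ne_of_gt ht0) two_ne_zero
  have hmain : besselY0 t - (2 / π) * L =
      (2/π) * ((L - Real.log 2 + γ) * J + S - L) := by
    unfold besselY0
    rw [hJ0eq, hSeq, hlog, ← hγdef]
    ring
  rw [hmain, abs_mul, abs_of_pos (by positivity : (0:ℝ) < 2/π)]
  apply mul_le_mul_of_nonneg_left _ (by positivity : (0:ℝ) ≤ 2/π)
  -- numeric facts
  have hL0 : L ≤ 0 := Real.log_nonpos (le_of_lt ht0) ht1
  have hγ1 : γ < 0.609 := aux_gamma_lt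
  have hγ2 : 1/2 < γ := Real.one_half_lt_eulerMascheroniConstant
  have hl2a : (0.6931471803:ℝ) < Real.log 2 := Real.log_two_gt_d9
  have hl2b : Real.log 2 < 0.6931471808 := Real.log_two_lt_d9
  -- bound (-L)*x ≤ 1/(8e) ≤ 0.046
  have hLx : (-L) * x ≤ 0.046 := by
    have h1 : Real.log (1/t^2) ≤ (1/t^2) / Real.exp 1 :=
      aux_log_le_div_e (by positivity)
    have h2 : Real.log (1/t^2) = -2 * L := by
      have hp : Real.log (t^2) = 2 * Real.log t := by
        rw [Real.log_pow]; push_cast; ring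
      rw [one_div, Real.log_inv, hp, hLdef]; ring
    have he : (2.7182818283:ℝ) < Real.exp 1 := Real.exp_one_gt_d9
    have ht2 : (0:ℝ) < t^2 := by positivity
    have h3 : (-2*L) * t^2 ≤ 1 / Real.exp 1 := by
      rw [h2] at h1
      calc (-2*L) * t^2 ≤ ((1/t^2) / Real.exp 1) * t^2 :=
            mul_le_mul_of_nonneg_right h1 (le_of_lt ht2)
        _ = 1 / Real.exp 1 := by field_simp
    have h4 : 1 / Real.exp 1 ≤ 1 / 2.7182818283 := by
      apply div_le_div_of_nonneg_left (by norm_num) (by norm_num) (le_of_lt he)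
    have h5 : (-L) * x = ((-2*L) * t^2) / 8 := by rw [hxdef]; ring
    rw [h5]
    nlinarith
  have hLx0 : 0 ≤ (-L) * x := mul_nonneg (by linarith) hx0
  -- bounds on J and S
  have hJup : J ≤ 1 - x + x^2/3 := by have := abs_le.mp hJ; linarith [this.2]
  have hJlo : 1 - x - x^2/3 ≤ J := by have := abs_le.mp hJ; linarith [this.1]
  have hSup : S ≤ x + 2*x^2/3 := by have := abs_le.mp hS; linarith [this.2]
  have hSlo : x - 2*x^2/3 ≤ S := by have := abs_le.mp hS; linarith [this.1]
  have hx2 : x^2 ≤ x/4 := by nlinarith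
  have hJ1 : J ≤ 1 := by nlinarith
  have hJ2 : 1 - 13*x/12 ≤ J := by nlinarith
  have hS0 : 0 ≤ S := by nlinarith
  have hS1 : S ≤ 7/24 := by nlinarith
  -- product bounds
  have hprod0 : 0 ≤ (-L) * (1 - J) := mul_nonneg (by linarith) (by linarith)
  have hprod1 : (-L) * (1 - J) ≤ 13/12 * ((-L) * x) := by
    have h := mul_nonneg (show (0:ℝ) ≤ -L by linarith)
      (show (0:ℝ) ≤ 13*x/12 - (1 - J) by nlinarith)
    nlinarith
  have hprod2 : (-L) * (1 - J) ≤ 0.04984 := by nlinarith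
  -- final: |(L - log2 + γ)J + S - L| ≤ log2 - γ + 1/4
  rw [abs_le]
  constructor
  · -- lower bound:  I ≥ γ - log2 - 1/4
    have hcJ : (γ - Real.log 2) * J ≥ γ - Real.log 2 := by nlinarith
    have hid : (L - Real.log 2 + γ) * J + S - L = (-L)*(1-J) + (γ - Real.log 2) * J + S := by
      ring
    rw [hid]
    nlinarith
  · have hcJ : (γ - Real.log 2) * J ≤ (γ - Real.log 2) * (1 - 13/48) := by nlinarith
    have hid : (L - Real.log 2 + γ) * J + S - L = (-L)*(1-J) + (γ - Real.log 2) * J + S := by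
      ring
    rw [hid]
    nlinarith
end

section
/- Suppose p ∈ BC(ℝ) satisfies p(s) ≤ −c² < 0 for all s ∈ ℝ, g ∈ BC(ℝ), v ∈ BC²(ℝ), and v''(s) + p(s)v(s) = g(s) for all s ∈ ℝ. Then for every 0 < β < c and α ≥ 0, with weight w_{β,α}(s) = exp(−β√(α² + s²)), one has (∫_ℝ (w_{β,α} v)² ds)^{1/2} ≤ (c² − β²)⁻¹ (∫_ℝ (w_{β,α} g)² ds)^{1/2}. -/
open MeasureTheory Real Filter Set Topology

section helpers
lemma integrable_exp_neg_mul_abs' {b : ℝ} (hb : 0 < b) :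
    Integrable (fun s : ℝ => Real.exp (-b * |s|)) := by
  have h1 : IntegrableOn (fun s : ℝ => Real.exp (-b * |s|)) (Ioi 0) := by
    refine (exp_neg_integrableOn_Ioi 0 hb).congr_fun ?_ measurableSet_Ioi
    intro s hs; simp [abs_of_pos (mem_Ioi.mp hs)]
  rw [← integrableOn_univ, ← @Iic_union_Ioi _ _ (0 : ℝ), integrableOn_union]
  refine ⟨?_, h1⟩
  rw [← (Measure.measurePreserving_neg (volume : Measure ℝ)).integrableOn_comp_preimage
      (Homeomorph.neg ℝ).measurableEmbedding]
  simp only [Function.comp_def, abs_neg, neg_preimage, neg_Iic, neg_zero]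
  exact Iff.mpr integrableOn_Ici_iff_integrableOn_Ioi h1

lemma integrable_of_exp_bound {f : ℝ → ℝ} (hf : AEStronglyMeasurable f volume)
    {C b : ℝ} (hb : 0 < b) (hbd : ∀ s, |f s| ≤ C * Real.exp (-b * |s|)) :
    Integrable f := by
  refine ((integrable_exp_neg_mul_abs' hb).const_mul C).mono' hf ?_
  filter_upwards with s
  simpa [Real.norm_eq_abs] using hbd s
end helpers

lemma agmon_key (W D p g v : ℝ → ℝ) (c β : ℝ)
    (hc : 0 < c) (hβ0 : 0 < β) (hβc : β < c)
    (hW_cont : Continuous W) (hWpos : ∀ s, 0 < W s)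
    (hW_decay : ∀ s, W s ≤ Real.exp (-β * |s|))
    (hD_meas : Measurable D)
    (hD_bd : ∀ s, |D s| ≤ β * W s)
    (hWd : ∀ s : ℝ, s ≠ 0 → HasDerivAt W (D s) s)
    (hp_cont : Continuous p)
    (hp_neg : ∀ s, p s ≤ -c ^ 2)
    (hg_cont : Continuous g) (hg_bdd : ∃ Cg, ∀ s, |g s| ≤ Cg)
    (hv : ContDiff ℝ 2 v)
    (hv_bdd : ∃ Cv, ∀ s, |v s| ≤ Cv ∧ |deriv v s| ≤ Cv ∧ |deriv (deriv v) s| ≤ Cv)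
    (hode : ∀ s, deriv (deriv v) s + p s * v s = g s) :
    Real.sqrt (∫ s : ℝ, (W s * v s) ^ 2) ≤
      (c ^ 2 - β ^ 2)⁻¹ * Real.sqrt (∫ s : ℝ, (W s * g s) ^ 2) := by
  obtain ⟨Cv, hCv⟩ := hv_bdd
  obtain ⟨Cg, hCg⟩ := hg_bdd
  have hCv0 : 0 ≤ Cv := le_trans (abs_nonneg _) (hCv 0).1
  have hCg0 : 0 ≤ Cg := le_trans (abs_nonneg _) (hCg 0)
  set v1 : ℝ → ℝ := deriv v with hv1def
  set v2 : ℝ → ℝ := deriv (deriv v) with hv2def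
  -- regularity of v
  have hvd : Differentiable ℝ v := hv.differentiable two_ne_zero
  have hv1c : ContDiff ℝ 1 v1 := by
    have h2 : ContDiff ℝ (1 + 1 : ℕ) v := by norm_num; exact hv
    exact (contDiff_succ_iff_deriv.mp h2).2.2
  have hv1d : Differentiable ℝ v1 := hv1c.differentiable one_ne_zero
  have hv1cont : Continuous v1 := hv1d.continuous
  have hv2cont : Continuous v2 := (contDiff_one_iff_deriv.mp hv1c).2
  have hvcont : Continuous v := hvd.continuous
  have h2β : (0:ℝ) < 2 * β := by linarith
  -- decay of W squared
  have hexp_sq : ∀ s : ℝ, (Real.exp (-β * |s|)) ^ 2 = Real.exp (-(2*β) * |s|) := by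
    intro s; rw [← Real.exp_nat_mul]; ring_nf
  have hW2 : ∀ s : ℝ, (W s) ^ 2 ≤ Real.exp (-(2 * β) * |s|) := by
    intro s
    rw [← hexp_sq s]
    have := hW_decay s
    nlinarith [(hWpos s).le]
  -- the main auxiliary functions
  set F : ℝ → ℝ := fun s => (W s)^2 * (v s * v1 s) with hFdef
  set G : ℝ → ℝ := fun s =>
    2 * W s * D s * (v s * v1 s) + (W s)^2 * (v1 s * v1 s + v s * v2 s) with hGdef
  -- derivative of F
  have hFd : ∀ s : ℝ, s ≠ 0 → HasDerivAt F (G s) s := by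
    intro s hs
    have h1 : HasDerivAt (fun t => (W t)^2) (2 * W s ^ 1 * D s) s := (hWd s hs).pow 2
    have h2 : HasDerivAt v (v1 s) s := (hvd s).hasDerivAt
    have h3 : HasDerivAt v1 (v2 s) s := (hv1d s).hasDerivAt
    have h4 : HasDerivAt (fun t => v t * v1 t) (v1 s * v1 s + v s * v2 s) s := h2.mul h3
    have := h1.mul h4
    exact this.congr_deriv (by rw [pow_one])
  -- integrability
  have hWm := hW_cont.measurable
  have i1 : Integrable (fun s => (W s * v s)^2) := by
    refine integrable_of_exp_bound (C := Cv^2) ((hW_cont.mul hvcont).pow 2).aestronglyMeasurable h2β ?_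
    intro s
    have h := hW2 s
    have hv' := (hCv s).1
    rw [abs_of_nonneg (sq_nonneg _), mul_pow]
    calc (W s)^2 * (v s)^2 ≤ (W s)^2 * Cv^2 := by
          apply mul_le_mul_of_nonneg_left _ (sq_nonneg _)
          nlinarith [abs_nonneg (v s), sq_abs (v s)]
      _ ≤ Cv^2 * Real.exp (-(2*β) * |s|) := by nlinarith [Real.exp_pos (-(2*β) * |s|)]
  have i2 : Integrable (fun s => (W s * g s)^2) := by
    refine integrable_of_exp_bound (C := Cg^2) ((hW_cont.mul hg_cont).pow 2).aestronglyMeasurable h2β ?_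
    intro s
    have h := hW2 s
    have hg' := hCg s
    rw [abs_of_nonneg (sq_nonneg _), mul_pow]
    calc (W s)^2 * (g s)^2 ≤ (W s)^2 * Cg^2 := by
          apply mul_le_mul_of_nonneg_left _ (sq_nonneg _)
          nlinarith [abs_nonneg (g s), sq_abs (g s)]
      _ ≤ Cg^2 * Real.exp (-(2*β) * |s|) := by nlinarith [Real.exp_pos (-(2*β) * |s|)]
  have i3 : Integrable (fun s => (W s)^2 * (g s * v s)) := by
    refine integrable_of_exp_bound (C := Cg * Cv)
      ((hW_cont.pow 2).mul (hg_cont.mul hvcont)).aestronglyMeasurable h2β ?_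
    intro s
    have h := hW2 s
    rw [abs_mul, abs_of_nonneg (sq_nonneg _), abs_mul]
    calc (W s)^2 * (|g s| * |v s|) ≤ (W s)^2 * (Cg * Cv) := by
          apply mul_le_mul_of_nonneg_left _ (sq_nonneg _)
          exact mul_le_mul (hCg s) (hCv s).1 (abs_nonneg _) hCg0
      _ ≤ (Cg * Cv) * Real.exp (-(2*β) * |s|) := by
          nlinarith [Real.exp_pos (-(2*β) * |s|), mul_nonneg hCg0 hCv0]
  have i4 : Integrable (fun s => (W s)^2 * (v s * v2 s)) := by
    refine integrable_of_exp_bound (C := Cv * Cv)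
      ((hW_cont.pow 2).mul (hvcont.mul hv2cont)).aestronglyMeasurable h2β ?_
    intro s
    have h := hW2 s
    rw [abs_mul, abs_of_nonneg (sq_nonneg _), abs_mul]
    calc (W s)^2 * (|v s| * |v2 s|) ≤ (W s)^2 * (Cv * Cv) := by
          apply mul_le_mul_of_nonneg_left _ (sq_nonneg _)
          exact mul_le_mul (hCv s).1 (hCv s).2.2 (abs_nonneg _) hCv0
      _ ≤ (Cv * Cv) * Real.exp (-(2*β) * |s|) := by
          nlinarith [Real.exp_pos (-(2*β) * |s|), mul_nonneg hCv0 hCv0]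
  have i5 : Integrable (fun s => (W s)^2 * (v1 s * v1 s)) := by
    refine integrable_of_exp_bound (C := Cv * Cv)
      ((hW_cont.pow 2).mul (hv1cont.mul hv1cont)).aestronglyMeasurable h2β ?_
    intro s
    have h := hW2 s
    rw [abs_mul, abs_of_nonneg (sq_nonneg _), abs_mul]
    calc (W s)^2 * (|v1 s| * |v1 s|) ≤ (W s)^2 * (Cv * Cv) := by
          apply mul_le_mul_of_nonneg_left _ (sq_nonneg _)
          exact mul_le_mul (hCv s).2.1 (hCv s).2.1 (abs_nonneg _) hCv0
      _ ≤ (Cv * Cv) * Real.exp (-(2*β) * |s|) := by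
          nlinarith [Real.exp_pos (-(2*β) * |s|), mul_nonneg hCv0 hCv0]
  have i6 : Integrable (fun s => 2 * W s * D s * (v s * v1 s)) := by
    refine integrable_of_exp_bound (C := 2 * β * (Cv * Cv)) ?_ h2β ?_
    · exact (((hWm.const_mul 2).mul hD_meas).mul
        (hvcont.measurable.mul hv1cont.measurable)).aestronglyMeasurable
    · intro s
      have hD := hD_bd s
      have hW := (hWpos s).le
      have h := hW2 s
      have hv' := (hCv s).1
      have hv1' := (hCv s).2.1
      calc |2 * W s * D s * (v s * v1 s)|
          = 2 * W s * |D s| * (|v s| * |v1 s|) := by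
            rw [abs_mul, abs_mul, abs_mul, abs_mul]
            rw [abs_of_nonneg (by norm_num : (0:ℝ) ≤ 2), abs_of_nonneg hW]
        _ ≤ 2 * W s * (β * W s) * (Cv * Cv) := by
            apply mul_le_mul
            · exact mul_le_mul_of_nonneg_left hD (by positivity)
            · exact mul_le_mul hv' hv1' (abs_nonneg _) hCv0
            · positivity
            · positivity
        _ = (2 * β * (Cv * Cv)) * (W s)^2 := by ring
        _ ≤ (2 * β * (Cv * Cv)) * Real.exp (-(2*β) * |s|) := by
            apply mul_le_mul_of_nonneg_left h (by positivity)
  have i7 : Integrable (fun s => p s * (W s * v s)^2) := by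
    refine integrable_of_exp_bound (C := (Cg + Cv) * Cv) ?_ h2β ?_
    · exact (hp_cont.mul ((hW_cont.mul hvcont).pow 2)).aestronglyMeasurable
    · intro s
      have h := hW2 s
      have hpv : |p s * v s| ≤ Cg + Cv := by
        have h1 : p s * v s = g s - v2 s := by linarith [hode s]
        rw [h1]
        calc |g s - v2 s| ≤ |g s| + |v2 s| := abs_sub _ _
          _ ≤ Cg + Cv := add_le_add (hCg s) (hCv s).2.2
      calc |p s * (W s * v s)^2| = (W s)^2 * (|p s * v s| * |v s|) := by
            have e1 : p s * (W s * v s)^2 = (W s)^2 * (p s * v s * v s) := by ring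
            rw [e1, abs_mul, abs_of_nonneg (sq_nonneg (W s)), abs_mul]
        _ ≤ (W s)^2 * ((Cg + Cv) * Cv) := by
            apply mul_le_mul_of_nonneg_left _ (sq_nonneg _)
            exact mul_le_mul hpv (hCv s).1 (abs_nonneg _) (by linarith)
        _ ≤ ((Cg + Cv) * Cv) * Real.exp (-(2*β) * |s|) := by
            nlinarith [Real.exp_pos (-(2*β) * |s|), mul_nonneg (by linarith : (0:ℝ) ≤ Cg + Cv) hCv0]
  have iG : Integrable G := by
    have h := i6.add (i5.add i4)
    refine h.congr ?_
    filter_upwards with s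
    simp only [Pi.add_apply, hGdef]
    ring
  -- F tends to 0 at ±∞
  have hFbd : ∀ s : ℝ, ‖F s‖ ≤ Cv^2 * Real.exp (-(2*β) * |s|) := by
    intro s
    rw [Real.norm_eq_abs, hFdef]
    have h := hW2 s
    calc |(W s)^2 * (v s * v1 s)| = (W s)^2 * (|v s| * |v1 s|) := by
          rw [abs_mul, abs_of_nonneg (sq_nonneg _), abs_mul]
      _ ≤ (W s)^2 * (Cv * Cv) := by
          apply mul_le_mul_of_nonneg_left _ (sq_nonneg _)
          exact mul_le_mul (hCv s).1 (hCv s).2.1 (abs_nonneg _) hCv0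
      _ ≤ Cv^2 * Real.exp (-(2*β) * |s|) := by nlinarith [Real.exp_pos (-(2*β) * |s|)]
  have hexp_tendsto_top : Tendsto (fun s : ℝ => Cv^2 * Real.exp (-(2*β) * |s|)) atTop (𝓝 0) := by
    have h1 : Tendsto (fun s : ℝ => (2*β) * |s|) atTop atTop :=
      (tendsto_abs_atTop_atTop.const_mul_atTop h2β)
    have h2 : Tendsto (fun s : ℝ => Real.exp (-((2*β) * |s|))) atTop (𝓝 0) :=
      Real.tendsto_exp_neg_atTop_nhds_zero.comp h1
    have := h2.const_mul (Cv^2)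
    simpa [neg_mul] using this
  have hexp_tendsto_bot : Tendsto (fun s : ℝ => Cv^2 * Real.exp (-(2*β) * |s|)) atBot (𝓝 0) := by
    have h1 : Tendsto (fun s : ℝ => (2*β) * |s|) atBot atTop :=
      ((tendsto_abs_atBot_atTop).const_mul_atTop h2β)
    have h2 : Tendsto (fun s : ℝ => Real.exp (-((2*β) * |s|))) atBot (𝓝 0) :=
      Real.tendsto_exp_neg_atTop_nhds_zero.comp h1
    have := h2.const_mul (Cv^2)
    simpa [neg_mul] using this
  have hFtop : Tendsto F atTop (𝓝 0) := squeeze_zero_norm hFbd hexp_tendsto_top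
  have hFbot : Tendsto F atBot (𝓝 0) := squeeze_zero_norm hFbd hexp_tendsto_bot
  have hFcont : Continuous F := (hW_cont.pow 2).mul (hvcont.mul hv1cont)
  -- integral of G is zero
  have hG0 : ∫ s : ℝ, G s = 0 := by
    have hIic : ∫ s in Iic (0:ℝ), G s = F 0 - 0 :=
      integral_Iic_of_hasDerivAt_of_tendsto hFcont.continuousWithinAt
        (fun x hx => hFd x (ne_of_lt hx)) iG.integrableOn hFbot
    have hIoi : ∫ s in Ioi (0:ℝ), G s = 0 - F 0 :=
      integral_Ioi_of_hasDerivAt_of_tendsto hFcont.continuousWithinAt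
        (fun x hx => hFd x (ne_of_gt hx)) iG.integrableOn hFtop
    rw [← intervalIntegral.integral_Iic_add_Ioi iG.integrableOn iG.integrableOn, hIic, hIoi]
    ring
  -- split ∫ G into three pieces
  have hsplit : ∫ s : ℝ, G s =
      (∫ s : ℝ, 2 * W s * D s * (v s * v1 s)) +
        ((∫ s : ℝ, (W s)^2 * (v1 s * v1 s)) + ∫ s : ℝ, (W s)^2 * (v s * v2 s)) := by
    have h1 : ∫ s : ℝ, G s = ∫ s : ℝ, (2 * W s * D s * (v s * v1 s) +
        ((W s)^2 * (v1 s * v1 s) + (W s)^2 * (v s * v2 s))) := by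
      apply integral_congr_ae
      filter_upwards with s
      simp only [hGdef]
      ring
    have i54 : Integrable (fun s => (W s)^2 * (v1 s * v1 s) + (W s)^2 * (v s * v2 s)) :=
      i5.add i4
    rw [h1, integral_add i6 i54, integral_add i5 i4]
  have key1 : ∫ s : ℝ, (W s)^2 * (v s * v2 s) =
      -(∫ s : ℝ, 2 * W s * D s * (v s * v1 s)) - ∫ s : ℝ, (W s)^2 * (v1 s * v1 s) := by
    have := hsplit
    rw [hG0] at this
    linarith
  -- bound on the cross term
  have hineq1 : -(∫ s : ℝ, 2 * W s * D s * (v s * v1 s)) ≤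
      β^2 * (∫ s : ℝ, (W s * v s)^2) + ∫ s : ℝ, (W s)^2 * (v1 s * v1 s) := by
    have hmono : ∫ s : ℝ, -(2 * W s * D s * (v s * v1 s)) ≤
        ∫ s : ℝ, (β^2 * (W s * v s)^2 + (W s)^2 * (v1 s * v1 s)) := by
      apply integral_mono i6.neg ((i1.const_mul (β^2)).add i5)
      intro s
      have hD := hD_bd s
      have hW := (hWpos s).le
      have habs : |2 * W s * D s * (v s * v1 s)| ≤ 2 * β * (W s)^2 * (|v s| * |v1 s|) := by
        calc |2 * W s * D s * (v s * v1 s)|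
            = 2 * W s * |D s| * (|v s| * |v1 s|) := by
              rw [abs_mul, abs_mul, abs_mul, abs_mul]
              rw [abs_of_nonneg (by norm_num : (0:ℝ) ≤ 2), abs_of_nonneg hW]
          _ ≤ 2 * W s * (β * W s) * (|v s| * |v1 s|) := by
              apply mul_le_mul_of_nonneg_right _ (by positivity)
              exact mul_le_mul_of_nonneg_left hD (by positivity)
          _ = 2 * β * (W s)^2 * (|v s| * |v1 s|) := by ring
      have h2 : -(2 * W s * D s * (v s * v1 s)) ≤ 2 * β * (W s)^2 * (|v s| * |v1 s|) :=
        le_trans (neg_le_abs _) habs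
      have h3 : 2 * β * (W s)^2 * (|v s| * |v1 s|) ≤
          β^2 * (W s * v s)^2 + (W s)^2 * (v1 s * v1 s) := by
        have e1 : (W s * |v s|)^2 = (W s * v s)^2 := by
          rw [mul_pow, mul_pow, sq_abs]
        have e2 : (W s * |v1 s|)^2 = (W s)^2 * (v1 s * v1 s) := by
          rw [mul_pow, sq_abs]; ring
        nlinarith [sq_nonneg (β * (W s * |v s|) - W s * |v1 s|), e1, e2]
      exact le_trans h2 h3
    rw [integral_neg, integral_add (i1.const_mul (β^2)) i5, integral_const_mul] at hmono
    exact hmono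
  have key2 : ∫ s : ℝ, (W s)^2 * (v s * v2 s) ≤ β^2 * ∫ s : ℝ, (W s * v s)^2 := by
    rw [key1]; linarith
  -- use the ODE
  have hodeI : ∫ s : ℝ, (W s)^2 * (g s * v s) =
      (∫ s : ℝ, (W s)^2 * (v s * v2 s)) + ∫ s : ℝ, p s * (W s * v s)^2 := by
    rw [← integral_add i4 i7]
    apply integral_congr_ae
    filter_upwards with s
    have h := hode s
    have : g s = v2 s + p s * v s := h.symm
    rw [this]; ring
  have hpI : ∫ s : ℝ, p s * (W s * v s)^2 ≤ -c^2 * ∫ s : ℝ, (W s * v s)^2 := by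
    rw [← integral_const_mul]
    apply integral_mono i7 (i1.const_mul _)
    intro s
    exact mul_le_mul_of_nonneg_right (hp_neg s) (sq_nonneg _)
  set I : ℝ := ∫ s : ℝ, (W s * v s)^2 with hIdef
  set E : ℝ := ∫ s : ℝ, (W s)^2 * (g s * v s) with hEdef
  set J : ℝ := ∫ s : ℝ, (W s * g s)^2 with hJdef
  have hI0 : 0 ≤ I := integral_nonneg fun s => sq_nonneg _
  have hJ0 : 0 ≤ J := integral_nonneg fun s => sq_nonneg _
  have hkey : (c^2 - β^2) * I ≤ -E := by
    have h9 : E ≤ β^2 * I - c^2 * I := by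
      rw [hodeI]
      linarith [key2, hpI]
    linarith [h9]
  -- Cauchy-Schwarz
  have hCS : -E ≤ Real.sqrt J * Real.sqrt I := by
    have h1 : -E ≤ |E| := neg_le_abs E
    have h2 : |E| ≤ ∫ s : ℝ, |W s * g s| * |W s * v s| := by
      calc |E| ≤ ∫ s : ℝ, ‖(W s)^2 * (g s * v s)‖ := by
            rw [hEdef, ← Real.norm_eq_abs]
            exact norm_integral_le_integral_norm _
        _ = ∫ s : ℝ, |W s * g s| * |W s * v s| := by
            apply integral_congr_ae
            filter_upwards with s
            rw [Real.norm_eq_abs, ← abs_mul]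
            congr 1
            ring
    have hmem1 : MemLp (fun s : ℝ => |W s * g s|) (ENNReal.ofReal 2) volume := by
      have : ENNReal.ofReal (2:ℝ) = 2 := by norm_num
      rw [this]
      refine (memLp_two_iff_integrable_sq
        (hW_cont.mul hg_cont).abs.aestronglyMeasurable).mpr ?_
      refine i2.congr ?_
      filter_upwards with s
      rw [sq_abs]; rfl
    have hmem2 : MemLp (fun s : ℝ => |W s * v s|) (ENNReal.ofReal 2) volume := by
      have : ENNReal.ofReal (2:ℝ) = 2 := by norm_num
      rw [this]
      refine (memLp_two_iff_integrable_sq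
        (hW_cont.mul hvcont).abs.aestronglyMeasurable).mpr ?_
      refine i1.congr ?_
      filter_upwards with s
      rw [sq_abs]; rfl
    have h3 := integral_mul_le_Lp_mul_Lq_of_nonneg ((by constructor <;> norm_num : Real.HolderConjugate 2 2))
      (Eventually.of_forall fun s => abs_nonneg (W s * g s))
      (Eventually.of_forall fun s => abs_nonneg (W s * v s)) hmem1 hmem2
    have h4 : (∫ s : ℝ, |W s * g s| ^ (2:ℝ)) = J := by
      rw [hJdef]
      apply integral_congr_ae
      filter_upwards with s
      rw [show (2:ℝ) = ((2:ℕ):ℝ) by norm_num, Real.rpow_natCast, sq_abs]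
    have h5 : (∫ s : ℝ, |W s * v s| ^ (2:ℝ)) = I := by
      rw [hIdef]
      apply integral_congr_ae
      filter_upwards with s
      rw [show (2:ℝ) = ((2:ℕ):ℝ) by norm_num, Real.rpow_natCast, sq_abs]
    rw [h4, h5] at h3
    calc -E ≤ |E| := h1
      _ ≤ ∫ s : ℝ, |W s * g s| * |W s * v s| := h2
      _ ≤ J ^ (1/2:ℝ) * I ^ (1/2:ℝ) := h3
      _ = Real.sqrt J * Real.sqrt I := by rw [Real.sqrt_eq_rpow, Real.sqrt_eq_rpow]
  -- conclude
  have hk : (0:ℝ) < c^2 - β^2 := by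
    have h := mul_pos (sub_pos.mpr hβc) (by linarith : (0:ℝ) < c + β)
    calc (0:ℝ) < (c - β) * (c + β) := h
      _ = c^2 - β^2 := by ring
  have hAI : Real.sqrt I ^ 2 = I := Real.sq_sqrt hI0
  have hfinal : (c^2 - β^2) * (Real.sqrt I * Real.sqrt I) ≤ Real.sqrt J * Real.sqrt I := by
    calc (c^2 - β^2) * (Real.sqrt I * Real.sqrt I) = (c^2 - β^2) * I := by
          rw [Real.mul_self_sqrt hI0]
      _ ≤ -E := hkey
      _ ≤ Real.sqrt J * Real.sqrt I := hCS

  rcases eq_or_lt_of_le (Real.sqrt_nonneg I) with hA | hA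
  · rw [← hA]
    exact mul_nonneg (inv_nonneg.mpr hk.le) (Real.sqrt_nonneg J)
  · have h6 : (c^2 - β^2) * Real.sqrt I ≤ Real.sqrt J := by
      have h7 := hfinal
      rw [show (c^2 - β^2) * (Real.sqrt I * Real.sqrt I)
          = ((c^2 - β^2) * Real.sqrt I) * Real.sqrt I from by ring] at h7
      exact le_of_mul_le_mul_right h7 hA
    calc Real.sqrt I = (c^2 - β^2)⁻¹ * ((c^2 - β^2) * Real.sqrt I) := by
          rw [inv_mul_cancel_left₀ (ne_of_gt hk)]
      _ ≤ (c^2 - β^2)⁻¹ * Real.sqrt J := by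
          exact mul_le_mul_of_nonneg_left h6 (inv_nonneg.mpr hk.le)

/-- Agmon-type weighted estimate (Lemma A.1): if `p ∈ BC(ℝ)` with `p ≤ −c² < 0`,
`g ∈ BC(ℝ)`, `v ∈ BC²(ℝ)` and `v'' + p v = g`, then for `0 < β < c` and `α ≥ 0`, with the
weight `w(s) = exp(−β√(α² + s²))`, one has `‖w v‖_{L²} ≤ (c² − β²)⁻¹ ‖w g‖_{L²}`. -/
theorem agmon_weighted_estimate
    (p g v : ℝ → ℝ) (c β α : ℝ)
    (hc : 0 < c) (hβ0 : 0 < β) (hβc : β < c) (hα : 0 ≤ α)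
    (hp_cont : Continuous p) (hp_bdd : ∃ Cp, ∀ s, |p s| ≤ Cp)
    (hp_neg : ∀ s, p s ≤ -c ^ 2)
    (hg_cont : Continuous g) (hg_bdd : ∃ Cg, ∀ s, |g s| ≤ Cg)
    (hv : ContDiff ℝ 2 v)
    (hv_bdd : ∃ Cv, ∀ s, |v s| ≤ Cv ∧ |deriv v s| ≤ Cv ∧ |deriv (deriv v) s| ≤ Cv)
    (hode : ∀ s, deriv (deriv v) s + p s * v s = g s) :
    Real.sqrt (∫ s : ℝ, (Real.exp (-β * Real.sqrt (α ^ 2 + s ^ 2)) * v s) ^ 2) ≤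
      (c ^ 2 - β ^ 2)⁻¹ *
        Real.sqrt (∫ s : ℝ, (Real.exp (-β * Real.sqrt (α ^ 2 + s ^ 2)) * g s) ^ 2) := by
  have hQcont : Continuous fun s : ℝ => Real.sqrt (α ^ 2 + s ^ 2) := by
    apply Continuous.sqrt
    continuity
  have hQnonneg : ∀ s : ℝ, 0 ≤ Real.sqrt (α ^ 2 + s ^ 2) := fun s => Real.sqrt_nonneg _
  have hQge : ∀ s : ℝ, |s| ≤ Real.sqrt (α ^ 2 + s ^ 2) := by
    intro s
    rw [← Real.sqrt_sq_eq_abs]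
    exact Real.sqrt_le_sqrt (by nlinarith [sq_nonneg α])
  exact agmon_key (fun s => Real.exp (-β * Real.sqrt (α ^ 2 + s ^ 2)))
    (fun s => -β * (s / Real.sqrt (α ^ 2 + s ^ 2)) *
      Real.exp (-β * Real.sqrt (α ^ 2 + s ^ 2)))
    p g v c β hc hβ0 hβc
    ((continuous_const.mul hQcont).rexp)
    (fun s => Real.exp_pos _)
    (by
      intro s
      apply Real.exp_le_exp.mpr
      nlinarith [hQge s, hβ0])
    (((measurable_const.mul (measurable_id'.div hQcont.measurable)).mul
      ((continuous_const.mul hQcont).rexp).measurable))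
    (by
      intro s
      have hW := Real.exp_pos (-β * Real.sqrt (α ^ 2 + s ^ 2))
      have habs : |s / Real.sqrt (α ^ 2 + s ^ 2)| ≤ 1 := by
        rcases eq_or_lt_of_le (hQnonneg s) with h | h
        · rw [← h]
          simp
        · rw [abs_div, abs_of_pos h]
          exact (div_le_one h).mpr (hQge s)
      calc |(-β * (s / Real.sqrt (α ^ 2 + s ^ 2))) *
            Real.exp (-β * Real.sqrt (α ^ 2 + s ^ 2))|
          = β * |s / Real.sqrt (α ^ 2 + s ^ 2)| *
            Real.exp (-β * Real.sqrt (α ^ 2 + s ^ 2)) := by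
            rw [abs_mul, abs_mul, abs_neg, abs_of_pos hβ0, abs_of_pos hW]
        _ ≤ β * 1 * Real.exp (-β * Real.sqrt (α ^ 2 + s ^ 2)) := by
            apply mul_le_mul_of_nonneg_right _ hW.le
            exact mul_le_mul_of_nonneg_left habs hβ0.le
        _ = β * Real.exp (-β * Real.sqrt (α ^ 2 + s ^ 2)) := by ring)
    (by
      intro s hs
      have hpos : (0:ℝ) < α ^ 2 + s ^ 2 := by positivity
      have hsq : (0:ℝ) < Real.sqrt (α ^ 2 + s ^ 2) := Real.sqrt_pos.mpr hpos
      have h1 : HasDerivAt (fun t : ℝ => α ^ 2 + t ^ 2) (2 * s) s := by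
        simpa using (hasDerivAt_pow 2 s).const_add (α ^ 2)
      have h2 : HasDerivAt (fun t : ℝ => Real.sqrt (α ^ 2 + t ^ 2))
          (1 / (2 * Real.sqrt (α ^ 2 + s ^ 2)) * (2 * s)) s :=
        (Real.hasDerivAt_sqrt (ne_of_gt hpos)).comp s h1
      have h3 := (h2.const_mul (-β)).exp
      convert h3 using 1
      field_simp)
    hp_cont hp_neg hg_cont hg_bdd hv hv_bdd hode
end
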